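/- Let D be the set of non-increasing right-continuous functions U : ℝ → [0,1] with lim_{x→−∞} U(x) = 1 and lim_{x→+∞} U(x) = 0, and for U ∈ D set a¹(U) := inf{x ∈ ℝ : U(x) < 1} ∈ ℝ ∪ {−∞}. Suppose U, V ∈ D satisfy U ≥_s V (U is more stretched than V) and −∞ < a¹(V) < a¹(U). Then U(x) ≥ V(x) for every x ∈ ℝ. -/
import Mathlib


open Filter Topology

/-- Membership in `D`: `U : ℝ → ℝ` is a non-increasing càdlàg function with values in
`[0,1]`, tending to `1` at `−∞` and to `0` at `+∞`. -/
def IsCCDF (U : ℝ → ℝ) : Prop :=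
  (∀ x, U x ∈ Set.Icc (0 : ℝ) 1) ∧ Antitone U ∧
  (∀ x, ContinuousWithinAt U (Set.Ici x) x) ∧
  Tendsto U atBot (𝓝 1) ∧ Tendsto U atTop (𝓝 0)

/-- `U ≥ₛ V`: for all `c ∈ ℝ` and `x₁ ≤ x₂`, `U(x₁) > V(x₁+c)` implies `U(x₂) ≥ V(x₂+c)`. -/
def MoreStretched (U V : ℝ → ℝ) : Prop :=
  ∀ c : ℝ, ∀ x₁ x₂ : ℝ, x₁ ≤ x₂ → V (x₁ + c) < U x₁ → V (x₂ + c) ≤ U x₂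

/-- `a¹(U) := inf {x : U(x) < 1} ∈ ℝ ∪ {−∞}`, as an extended real. -/
noncomputable def aOne (U : ℝ → ℝ) : EReal :=
  sInf ((fun x : ℝ => (x : EReal)) '' {x : ℝ | U x < 1})

/-- If `U, V ∈ D`, `U` is more stretched than `V`, and `−∞ < a¹(V) < a¹(U)`, then
`U(x) ≥ V(x)` for every `x ∈ ℝ`: a more stretched profile whose front lies strictly
to the right dominates pointwise. -/
theorem moreStretched_dominates
    (U V : ℝ → ℝ) (hU : IsCCDF U) (hV : IsCCDF V)
    (hstretch : MoreStretched U V)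
    (hVbot : (⊥ : EReal) < aOne V) (hlt : aOne V < aOne U) :
    ∀ x : ℝ, V x ≤ U x := by
  intro x
  obtain ⟨b, hb1, hb2⟩ := EReal.exists_between_coe_real hlt
  have hVb : V b < 1 := by
    obtain ⟨a, ha, hab⟩ := sInf_lt_iff.mp hb1
    obtain ⟨y, hy, rfl⟩ := ha
    exact lt_of_le_of_lt (hV.2.1 (by simpa using (EReal.coe_le_coe_iff.mp hab.le))) hy
  have hUb : V b < U b := by
    have h1 : U b = 1 := by
      by_contra h
      have hUb1 : U b < 1 := lt_of_le_of_ne (hU.1 b).2 h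
      have : aOne U ≤ (b : EReal) := sInf_le ⟨b, hUb1, rfl⟩
      exact absurd hb2 (not_lt.mpr this)
    rw [h1]; exact hVb
  rcases le_or_gt b x with h | h
  · have := hstretch 0 b x h (by simpa using hUb)
    simpa using this
  · have h1 : U x = 1 := by
      by_contra hne
      have hx1 : U x < 1 := lt_of_le_of_ne (hU.1 x).2 hne
      have : aOne U ≤ (x : EReal) := sInf_le ⟨x, hx1, rfl⟩
      exact absurd (lt_trans (by exact_mod_cast h) hb2) (not_lt.mpr this)
    rw [h1]; exact (hV.1 x).2
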